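/- If 𝒯'₀ generates the E-closed set 𝒯₀, then a theory T ∈ 𝒯'₀ is isolated in 𝒯'₀ (some φ ∈ T has (𝒯'₀)_φ = {T}) if and only if T is isolated in 𝒯₀ (some ψ ∈ T has (𝒯₀)_ψ = {T}). -/
import Mathlib

open Set

variable {σ : Type*}

/-- For a family 𝒯 of theories (sets of sentences) and a sentence φ,
`Tphi 𝒯 φ` is the set 𝒯_φ = {T ∈ 𝒯 | φ ∈ T}. -/
def Tphi (𝒯 : Set (Set σ)) (φ : σ) : Set (Set σ) := {T ∈ 𝒯 | φ ∈ T}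

/-- E-closure relative to the ambient set `S` of all complete theories:
`ClE S 𝒯 = 𝒯 ∪ {T ∈ S | ∀ φ ∈ T, 𝒯_φ is infinite}`. -/
def ClE (S 𝒯 : Set (Set σ)) : Set (Set σ) :=
  𝒯 ∪ {T ∈ S | ∀ φ ∈ T, (Tphi 𝒯 φ).Infinite}

/-- 𝒯 is E-closed if it equals its own E-closure. -/
def EClosed (S 𝒯 : Set (Set σ)) : Prop := ClE S 𝒯 = 𝒯

/-- `𝒯'` is a generating set for `𝒯`. -/
def Generates (S 𝒯' 𝒯 : Set (Set σ)) : Prop := 𝒯' ⊆ 𝒯 ∧ ClE S 𝒯' = 𝒯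

/-- `𝒯'` is the least generating set for `𝒯`. -/
def IsLeastGen (S 𝒯' 𝒯 : Set (Set σ)) : Prop :=
  Generates S 𝒯' 𝒯 ∧ ∀ 𝒯'', Generates S 𝒯'' 𝒯 → 𝒯' ⊆ 𝒯''

/-- `T` is an isolated point of `𝒯`: some sentence φ ∈ T has 𝒯_φ = {T}. -/
def IsolatedIn (𝒯 : Set (Set σ)) (T : Set σ) : Prop := ∃ φ ∈ T, Tphi 𝒯 φ = {T}

/-- The meet operation ∧′: E-closure of the set of isolated points of 𝒯₁ ∩ 𝒯₂. -/
def meetI (S 𝒯₁ 𝒯₂ : Set (Set σ)) : Set (Set σ) :=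
  ClE S {T ∈ 𝒯₁ ∩ 𝒯₂ | IsolatedIn (𝒯₁ ∩ 𝒯₂) T}

/-- Theorem 1.3, (3) ⇔ (4): for a generating set 𝒯'₀ of the E-closed set 𝒯₀, a theory
T ∈ 𝒯'₀ is isolated in 𝒯'₀ iff it is isolated in 𝒯₀. -/
theorem isolated_iff {σ : Type*} (S 𝒯'₀ 𝒯₀ : Set (Set σ))
    (hS : ∀ T ∈ S, T.Nonempty) (h𝒯 : 𝒯₀ ⊆ S)
    (hcl : EClosed S 𝒯₀) (hgen : Generates S 𝒯'₀ 𝒯₀)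
    (T : Set σ) (hT : T ∈ 𝒯'₀) :
    IsolatedIn 𝒯'₀ T ↔ IsolatedIn 𝒯₀ T := by
  obtain ⟨hsub, hgen⟩ := hgen
  constructor
  · rintro ⟨φ, hφT, hφ⟩
    refine ⟨φ, hφT, ?_⟩
    ext T'
    constructor
    · rintro ⟨hT'₀, hφT'⟩
      rw [← hgen] at hT'₀
      rcases hT'₀ with h | ⟨_, hinf⟩
      · have : T' ∈ Tphi 𝒯'₀ φ := ⟨h, hφT'⟩
        rwa [hφ] at this
      · exfalso
        have := hinf φ hφT'
        rw [hφ] at this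
        exact this (Set.finite_singleton T)
    · rintro rfl
      exact ⟨hsub hT, hφT⟩
  · rintro ⟨φ, hφT, hφ⟩
    refine ⟨φ, hφT, ?_⟩
    apply Set.Subset.antisymm
    · rintro T' ⟨hT'₀, hφT'⟩
      have : T' ∈ Tphi 𝒯₀ φ := ⟨hsub hT'₀, hφT'⟩
      rwa [hφ] at this
    · rintro T' rfl
      exact ⟨hT, hφT⟩
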